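/- Let F = R((ε_1))...((ε_n)) and let φ: R^n → F be an R-linear map (the restriction of an F-linear form on F^n). Then the set S = {w ∈ R^n : φ(w) > 0 in F} is a finite disjoint union of sets of the form {w : φ_r(w) > 0 and φ_s(w) = 0 for all s < r}, each of which is an intersection of an open half-space with a linear subspace of R^n; in particular only finitely many such pieces are nonempty. -/

import Mathlib

open Matrix
open scoped BigOperators

noncomputable section

/-- The iterated Laurent series field `ℝ((ε_1))...((ε_n))`, together with its field
structure (built by recursion). -/
def IterData : ℕ → Σ' (T : Type), Field T
  | 0 => ⟨ℝ, inferInstance⟩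
  | (n + 1) =>
    let p := IterData n
    letI : Field p.1 := p.2
    ⟨LaurentSeries p.1, inferInstance⟩

/-- The iterated Laurent series field `F = ℝ((ε_1))...((ε_n))`. -/
def IterLaurent (n : ℕ) : Type := (IterData n).1

instance (n : ℕ) : Field (IterLaurent n) := (IterData n).2

/-- `IterLaurent 0` is definitionally `ℝ`. -/
def toR (x : IterLaurent 0) : ℝ := x

/-- `IterLaurent (n+1)` is definitionally the Laurent series field over `IterLaurent n`. -/
def toLS {n : ℕ} (x : IterLaurent (n + 1)) : LaurentSeries (IterLaurent n) := x

/-- An element of `ℝ((ε_1))...((ε_n))` is *positive* if it is nonzero and the leading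
coefficient (the coefficient of the smallest exponent, exponents being ordered
lexicographically with `ε_{i+1}` infinitesimal with respect to `ε_i`) is positive. -/
def IterPos : ∀ n : ℕ, IterLaurent n → Prop
  | 0, x => 0 < toR x
  | (n + 1), x => toLS x ≠ 0 ∧ IterPos n ((toLS x).coeff (toLS x).order)

/-- The order relation on `ℝ((ε_1))...((ε_n))`: `x < y` iff `y - x` is positive. -/
def llt (n : ℕ) (x y : IterLaurent n) : Prop := IterPos n (y - x)

/-- The embedding of `ℝ` into `ℝ((ε_1))...((ε_n))` as constant series. -/
def realEmb : ∀ n : ℕ, ℝ → IterLaurent n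
  | 0, r => r
  | (n + 1), r => (HahnSeries.C (realEmb n r) : LaurentSeries (IterLaurent n))

/-- The variable `ε_{i+1}` as an element of `ℝ((ε_1))...((ε_n))` (for `i : Fin n`). -/
def epsV : ∀ n : ℕ, Fin n → IterLaurent n
  | (n + 1), i =>
    if h : (i : ℕ) < n then
      (HahnSeries.C (epsV n ⟨i, h⟩) : LaurentSeries (IterLaurent n))
    else (HahnSeries.single (1 : ℤ) 1 : LaurentSeries (IterLaurent n))

/-- The coefficient of the monomial `ε^r = ε_1^{r_1} ⋯ ε_n^{r_n}` in an element of
`ℝ((ε_1))...((ε_n))`. -/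
def coeffIter : ∀ n : ℕ, IterLaurent n → (Fin n → ℤ) → ℝ
  | 0, x, _ => toR x
  | (n + 1), x, r => coeffIter n ((toLS x).coeff (r (Fin.last n))) (r ∘ Fin.castSucc)

/-- The lexicographic order on multi-indices: `s < r` iff there is an `i` with
`s_i < r_i` and `s_j = r_j` for all `j > i`. -/
def lexLt {n : ℕ} (s r : Fin n → ℤ) : Prop :=
  ∃ i : Fin n, s i < r i ∧ ∀ j : Fin n, i < j → s j = r j

/-- For an `F`-linear form `ψ` on `F^n` (`F = ℝ((ε_1))...((ε_n))`) restricted to `ℝ^n`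
as `φ(w) = ψ(w)`, with `φ = ∑_r φ_r ε^r`, the piece
`S_r = {w : φ_r(w) > 0 and φ_s(w) = 0 for all s < r}`. -/
def Sr (n : ℕ) (ψ : (Fin n → IterLaurent n) →ₗ[IterLaurent n] IterLaurent n)
    (r : Fin n → ℤ) : Set (Fin n → ℝ) :=
  {w | 0 < coeffIter n (ψ fun j => realEmb n (w j)) r ∧
    ∀ s, lexLt s r → coeffIter n (ψ fun j => realEmb n (w j)) s = 0}
section Aux

theorem coeffIter_succ (n : ℕ) (x : IterLaurent (n+1)) (r : Fin (n+1) → ℤ) :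
    coeffIter (n+1) x r
      = coeffIter n ((toLS x).coeff (r (Fin.last n))) (r ∘ Fin.castSucc) := rfl

theorem coeffIter_add (n : ℕ) (x y : IterLaurent n) (r : Fin n → ℤ) :
    coeffIter n (x + y) r = coeffIter n x r + coeffIter n y r := by
  induction n with
  | zero => rfl
  | succ n ih =>
    rw [coeffIter_succ, coeffIter_succ, coeffIter_succ,
      show toLS (x + y) = toLS x + toLS y from rfl, HahnSeries.coeff_add]
    exact ih _ _ _

theorem coeffIter_zero (n : ℕ) (r : Fin n → ℤ) : coeffIter n 0 r = 0 := by
  induction n with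
  | zero => rfl
  | succ n ih =>
    rw [coeffIter_succ, show toLS (0 : IterLaurent (n+1)) = 0 from rfl,
      HahnSeries.coeff_zero]
    exact ih _

theorem realEmb_add (n : ℕ) (a b : ℝ) :
    realEmb n (a + b) = realEmb n a + realEmb n b := by
  induction n with
  | zero => rfl
  | succ n ih =>
    show (HahnSeries.C (realEmb n (a+b)) : LaurentSeries (IterLaurent n))
      = HahnSeries.C (realEmb n a) + HahnSeries.C (realEmb n b)
    rw [ih]
    exact _root_.map_add HahnSeries.C _ _

theorem realEmb_mul (n : ℕ) (a b : ℝ) :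
    realEmb n (a * b) = realEmb n a * realEmb n b := by
  induction n with
  | zero => rfl
  | succ n ih =>
    show (HahnSeries.C (realEmb n (a*b)) : LaurentSeries (IterLaurent n))
      = HahnSeries.C (realEmb n a) * HahnSeries.C (realEmb n b)
    rw [ih]
    exact _root_.map_mul HahnSeries.C _ _

theorem coeffIter_realEmb_mul (n : ℕ) (c : ℝ) (x : IterLaurent n) (r : Fin n → ℤ) :
    coeffIter n (realEmb n c * x) r = c * coeffIter n x r := by
  induction n with
  | zero => rfl
  | succ n ih =>
    rw [coeffIter_succ, coeffIter_succ,
      show toLS (realEmb (n+1) c * x)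
        = (HahnSeries.C (realEmb n c) : LaurentSeries (IterLaurent n)) * toLS x from rfl,
      HahnSeries.C_mul_eq_smul, HahnSeries.coeff_smul, smul_eq_mul]
    exact ih _ _

theorem eq_zero_of_coeffIter (n : ℕ) (x : IterLaurent n)
    (h : ∀ r, coeffIter n x r = 0) : x = 0 := by
  induction n with
  | zero => exact h (fun _ => 0)
  | succ n ih =>
    show toLS x = 0
    ext k
    rw [HahnSeries.coeff_zero]
    refine ih _ (fun r' => ?_)
    have := h (Fin.snoc r' k)
    rwa [coeffIter_succ, Fin.snoc_last,
      show (Fin.snoc r' k : Fin (n+1) → ℤ) ∘ Fin.castSucc = r' from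
        funext fun i => Fin.snoc_castSucc _ _ _] at this

theorem lexLt_trichotomy {n : ℕ} {r s : Fin n → ℤ} (h : r ≠ s) :
    lexLt r s ∨ lexLt s r := by
  classical
  have hex : ∃ i, r i ≠ s i := Function.ne_iff.mp h
  set A : Finset (Fin n) := Finset.univ.filter (fun i => r i ≠ s i) with hAdef
  have hA : A.Nonempty := ⟨hex.choose, by simp [hAdef, hex.choose_spec]⟩
  set i := A.max' hA with hidef
  have hi : r i ≠ s i := by
    have := A.max'_mem hA
    simpa [hAdef] using this
  have hj : ∀ j, i < j → r j = s j := by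
    intro j hij
    by_contra hne
    have hjA : j ∈ A := by simp [hAdef, hne]
    exact absurd (A.le_max' j hjA) (not_le.mpr hij)
  rcases lt_or_gt_of_ne hi with h' | h'
  · exact Or.inl ⟨i, h', hj⟩
  · exact Or.inr ⟨i, h', fun j hij => (hj j hij).symm⟩

theorem lexLt_irrefl {n : ℕ} (r : Fin n → ℤ) : ¬ lexLt r r := by
  rintro ⟨i, hi, -⟩; exact lt_irrefl _ hi

theorem lexLt_trans {n : ℕ} {a b c : Fin n → ℤ}
    (h1 : lexLt a b) (h2 : lexLt b c) : lexLt a c := by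
  obtain ⟨i, hi, hij⟩ := h1
  obtain ⟨i', hi', hij'⟩ := h2
  rcases lt_trichotomy i i' with h | h | h
  · exact ⟨i', (hij i' h).symm ▸ hi', fun j hj => (hij j (h.trans hj)).trans (hij' j hj)⟩
  · subst h
    exact ⟨i, hi.trans hi', fun j hj => (hij j hj).trans (hij' j hj)⟩
  · exact ⟨i, hi.trans_eq (hij' i h), fun j hj => (hij j hj).trans (hij' j (h.trans hj))⟩

theorem exists_lexLt_min {n : ℕ} (A : Finset (Fin n → ℤ)) (hA : A.Nonempty) :
    ∃ m ∈ A, ∀ x ∈ A, x ≠ m → lexLt m x := by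
  classical
  induction A using Finset.cons_induction with
  | empty => exact absurd hA (by simp)
  | cons a B ha ih =>
    rcases B.eq_empty_or_nonempty with rfl | hB
    · refine ⟨a, by simp, ?_⟩
      intro x hx hxa
      simp only [Finset.mem_cons, Finset.notMem_empty, or_false] at hx
      exact absurd hx hxa
    · obtain ⟨m, hm, hmin⟩ := ih hB
      have hma : m ≠ a := fun h => ha (h ▸ hm)
      rcases lexLt_trichotomy hma with hlt | hlt
      · refine ⟨m, Finset.mem_cons_of_mem hm, ?_⟩
        intro x hx hxm
        rcases Finset.mem_cons.mp hx with rfl | hxB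
        · exact hlt
        · exact hmin x hxB hxm
      · refine ⟨a, Finset.mem_cons_self a B, ?_⟩
        intro x hx hxa
        rcases Finset.mem_cons.mp hx with rfl | hxB
        · exact absurd rfl hxa
        · rcases eq_or_ne x m with rfl | hxm
          · exact hlt
          · exact lexLt_trans hlt (hmin x hxB hxm)

theorem lexLt_succ_iff {n : ℕ} (s r : Fin (n+1) → ℤ) :
    lexLt s r ↔ s (Fin.last n) < r (Fin.last n) ∨
      (s (Fin.last n) = r (Fin.last n) ∧ lexLt (s ∘ Fin.castSucc) (r ∘ Fin.castSucc)) := by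
  constructor
  · rintro ⟨i, hi, hj⟩
    rcases Fin.eq_castSucc_or_eq_last i with ⟨k, rfl⟩ | rfl
    · refine Or.inr ⟨hj _ (Fin.castSucc_lt_last k), ⟨k, hi, fun j hkj => ?_⟩⟩
      exact hj j.castSucc (Fin.castSucc_lt_castSucc_iff.mpr hkj)
    · exact Or.inl hi
  · rintro (h | ⟨he, k, hk, hkj⟩)
    · exact ⟨Fin.last n, h, fun j hj => absurd hj (not_lt.mpr (Fin.le_last j))⟩
    · refine ⟨k.castSucc, hk, fun j hj => ?_⟩
      rcases Fin.eq_castSucc_or_eq_last j with ⟨m, rfl⟩ | rfl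
      · exact hkj m (Fin.castSucc_lt_castSucc_iff.mp hj)
      · exact he

theorem iterPos_iff (n : ℕ) (x : IterLaurent n) :
    IterPos n x ↔ ∃ r, 0 < coeffIter n x r ∧ ∀ s, lexLt s r → coeffIter n x s = 0 := by
  induction n with
  | zero =>
    constructor
    · intro h
      exact ⟨fun _ => 0, h, fun s hs => absurd hs (fun ⟨i, _⟩ => i.elim0)⟩
    · rintro ⟨r, hr, -⟩
      exact hr
  | succ n ih =>
    constructor
    · rintro ⟨hx0, hpos⟩
      obtain ⟨r', hr', hz'⟩ := (ih _).mp hpos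
      refine ⟨Fin.snoc r' ((toLS x).order), ?_, ?_⟩
      · rwa [coeffIter_succ, Fin.snoc_last,
          show (Fin.snoc r' ((toLS x).order) : Fin (n+1) → ℤ) ∘ Fin.castSucc = r' from
            funext fun i => Fin.snoc_castSucc _ _ _]
      · intro s hs
        rw [lexLt_succ_iff] at hs
        rw [coeffIter_succ]
        rcases hs with h | ⟨he, hlex⟩
        · rw [Fin.snoc_last] at h
          rw [HahnSeries.coeff_eq_zero_of_lt_order h, coeffIter_zero]
        · rw [Fin.snoc_last] at he
          rw [he]
          refine hz' _ ?_
          rwa [show (Fin.snoc r' ((toLS x).order) : Fin (n+1) → ℤ) ∘ Fin.castSucc = r' from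
            funext fun i => Fin.snoc_castSucc _ _ _] at hlex
    · rintro ⟨r, hr, hz⟩
      have hx0 : toLS x ≠ 0 := by
        intro h0
        rw [coeffIter_succ, h0, HahnSeries.coeff_zero, coeffIter_zero] at hr
        exact lt_irrefl _ hr
      have hord : (toLS x).order = r (Fin.last n) := by
        rcases lt_trichotomy ((toLS x).order) (r (Fin.last n)) with h | h | h
        · exfalso
          have hc : (toLS x).coeff (toLS x).order ≠ 0 :=
            mt HahnSeries.coeff_order_eq_zero.mp hx0
          apply hc
          refine eq_zero_of_coeffIter n _ (fun r' => ?_)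
          have := hz (Fin.snoc r' ((toLS x).order))
            ⟨Fin.last n, by rwa [Fin.snoc_last], fun j hj =>
              absurd hj (not_lt.mpr (Fin.le_last j))⟩
          rwa [coeffIter_succ, Fin.snoc_last,
            show (Fin.snoc r' ((toLS x).order) : Fin (n+1) → ℤ) ∘ Fin.castSucc = r' from
              funext fun i => Fin.snoc_castSucc _ _ _] at this
        · exact h
        · exfalso
          rw [coeffIter_succ, HahnSeries.coeff_eq_zero_of_lt_order h, coeffIter_zero] at hr
          exact lt_irrefl _ hr
      refine ⟨hx0, (ih _).mpr ⟨r ∘ Fin.castSucc, ?_, ?_⟩⟩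
      · rw [hord]
        rwa [coeffIter_succ] at hr
      · intro s' hs'
        have := hz (Fin.snoc s' (r (Fin.last n)))
          ((lexLt_succ_iff _ _).mpr (Or.inr ⟨by rw [Fin.snoc_last], by
            rwa [show (Fin.snoc s' (r (Fin.last n)) : Fin (n+1) → ℤ) ∘ Fin.castSucc = s' from
              funext fun i => Fin.snoc_castSucc _ _ _]⟩))
        rw [coeffIter_succ, Fin.snoc_last,
          show (Fin.snoc s' (r (Fin.last n)) : Fin (n+1) → ℤ) ∘ Fin.castSucc = s' from
            funext fun i => Fin.snoc_castSucc _ _ _] at this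
        rw [hord]
        exact this

/-- The coefficient linear form `φ_r : ℝ^n → ℝ`. -/
def fr (n : ℕ) (ψ : (Fin n → IterLaurent n) →ₗ[IterLaurent n] IterLaurent n)
    (r : Fin n → ℤ) : (Fin n → ℝ) →ₗ[ℝ] ℝ where
  toFun w := coeffIter n (ψ fun j => realEmb n (w j)) r
  map_add' w w' := by
    show coeffIter n (ψ fun j => realEmb n ((w + w') j)) r
      = coeffIter n (ψ fun j => realEmb n (w j)) r + coeffIter n (ψ fun j => realEmb n (w' j)) r
    have h : (fun j => realEmb n ((w + w') j))
        = (fun j => realEmb n (w j)) + (fun j => realEmb n (w' j)) := by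
      funext j
      show realEmb n (w j + w' j) = realEmb n (w j) + realEmb n (w' j)
      exact realEmb_add n _ _
    rw [h, map_add, coeffIter_add]
  map_smul' c w := by
    show coeffIter n (ψ fun j => realEmb n ((c • w) j)) r
      = c * coeffIter n (ψ fun j => realEmb n (w j)) r
    have h : (fun j => realEmb n ((c • w) j))
        = realEmb n c • (fun j => realEmb n (w j)) := by
      funext j
      show realEmb n (c * w j) = realEmb n c * realEmb n (w j)
      exact realEmb_mul n _ _
    rw [h, _root_.map_smul, smul_eq_mul, coeffIter_realEmb_mul]

theorem fr_apply (n : ℕ) (ψ : (Fin n → IterLaurent n) →ₗ[IterLaurent n] IterLaurent n)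
    (r : Fin n → ℤ) (w : Fin n → ℝ) :
    fr n ψ r w = coeffIter n (ψ fun j => realEmb n (w j)) r := rfl

end Aux

/-- Let `φ : ℝ^n → F` be the restriction of an `F`-linear form `ψ` on `F^n`.  Then the
set `S = {w ∈ ℝ^n : φ(w) > 0}` is the disjoint union of the pieces
`S_r = {w : φ_r(w) > 0, φ_s(w) = 0 ∀ s < r}`; each nonempty piece is the intersection
of an open half-space with a linear subspace of `ℝ^n`, and only finitely many pieces
are nonempty. -/
theorem stmt15 (n : ℕ) (ψ : (Fin n → IterLaurent n) →ₗ[IterLaurent n] IterLaurent n) :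
    ({w : Fin n → ℝ | IterPos n (ψ fun j => realEmb n (w j))} = ⋃ r : Fin n → ℤ, Sr n ψ r) ∧
    (∀ r s : Fin n → ℤ, r ≠ s → Disjoint (Sr n ψ r) (Sr n ψ s)) ∧
    (∀ r : Fin n → ℤ, (Sr n ψ r).Nonempty →
      ∃ (f : (Fin n → ℝ) →ₗ[ℝ] ℝ) (V : Submodule ℝ (Fin n → ℝ)),
        Sr n ψ r = {w | 0 < f w} ∩ (V : Set (Fin n → ℝ))) ∧
    {r : Fin n → ℤ | (Sr n ψ r).Nonempty}.Finite := by
  classical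
  refine ⟨?_, ?_, ?_, ?_⟩
  · ext w
    constructor
    · intro hw
      rw [Set.mem_setOf_eq, iterPos_iff] at hw
      obtain ⟨r, h1, h2⟩ := hw
      exact Set.mem_iUnion.mpr ⟨r, h1, h2⟩
    · intro hw
      obtain ⟨r, h1, h2⟩ := Set.mem_iUnion.mp hw
      rw [Set.mem_setOf_eq, iterPos_iff]
      exact ⟨r, h1, h2⟩
  · intro r s hrs
    rw [Set.disjoint_left]
    rintro w ⟨hr1, hr2⟩ ⟨hs1, hs2⟩
    rcases lexLt_trichotomy hrs with h | h
    · exact absurd (hs2 r h) (ne_of_gt hr1)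
    · exact absurd (hr2 s h) (ne_of_gt hs1)
  · intro r _
    refine ⟨fr n ψ r, ⨅ s ∈ {s | lexLt s r}, LinearMap.ker (fr n ψ s), ?_⟩
    ext w
    constructor
    · rintro ⟨h1, h2⟩
      refine ⟨h1, ?_⟩
      rw [SetLike.mem_coe, Submodule.mem_iInf]
      intro s
      rw [Submodule.mem_iInf]
      intro hs
      exact LinearMap.mem_ker.mpr (h2 s hs)
    · rintro ⟨h1, h2⟩
      rw [SetLike.mem_coe, Submodule.mem_iInf] at h2
      exact ⟨h1, fun s hs =>
        LinearMap.mem_ker.mp ((Submodule.mem_iInf _).mp (h2 s) hs)⟩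
  · by_contra hfin
    have hinf : {r : Fin n → ℤ | (Sr n ψ r).Nonempty}.Infinite := hfin
    obtain ⟨R, hRT, hcard⟩ := hinf.exists_subset_card_eq (n + 1)
    set w : (Fin n → ℤ) → (Fin n → ℝ) :=
      fun r => if h : (Sr n ψ r).Nonempty then h.choose else 0 with hwdef
    have hw : ∀ r, (Sr n ψ r).Nonempty → w r ∈ Sr n ψ r := by
      intro r h
      rw [hwdef]
      simp only [dif_pos h]
      exact h.choose_spec
    have hnli : ¬ LinearIndependent ℝ (fun i : ↥R => w i.1) := by
      intro h
      have h1 := h.fintype_card_le_finrank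
      rw [Fintype.card_coe, hcard, Module.finrank_fin_fun] at h1
      omega
    rw [Fintype.not_linearIndependent_iff] at hnli
    obtain ⟨c, hsum, i₀, hi₀⟩ := hnli
    set A : Finset (Fin n → ℤ) := R.filter (fun x => ∃ h : x ∈ R, c ⟨x, h⟩ ≠ 0) with hAdef
    have hi₀A : (i₀ : Fin n → ℤ) ∈ A :=
      Finset.mem_filter.mpr ⟨i₀.2, i₀.2, hi₀⟩
    obtain ⟨m, hmA, hmmin⟩ := exists_lexLt_min A ⟨i₀.1, hi₀A⟩
    obtain ⟨hmR, hmR', hcm⟩ := Finset.mem_filter.mp hmA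
    have hwm : w m ∈ Sr n ψ m := hw m (hRT hmR)
    have h0 : fr n ψ m (∑ i : ↥R, c i • w i.1) = 0 := by
      rw [hsum]; exact map_zero _
    rw [map_sum] at h0
    simp only [LinearMap.map_smul, smul_eq_mul] at h0
    have hterm : ∀ i ∈ (Finset.univ : Finset ↥R), i ≠ ⟨m, hmR⟩ →
        c i * fr n ψ m (w i.1) = 0 := by
      intro i _ hne
      rcases eq_or_ne (c i) 0 with hc | hc
      · rw [hc, zero_mul]
      · have hiA : (i : Fin n → ℤ) ∈ A := Finset.mem_filter.mpr ⟨i.2, i.2, hc⟩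
        have hne' : (i : Fin n → ℤ) ≠ m := fun h => hne (Subtype.ext h)
        have hz := (hw i.1 (hRT i.2)).2 m (hmmin _ hiA hne')
        rw [fr_apply, hz, mul_zero]
    rw [Finset.sum_eq_single_of_mem ⟨m, hmR⟩ (Finset.mem_univ _) hterm] at h0
    have hpos : 0 < fr n ψ m (w m) := hwm.1
    have hcm' : c ⟨m, hmR⟩ ≠ 0 := hcm
    exact mul_ne_zero hcm' (ne_of_gt hpos) h0
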